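/- For every q-ary DMC W (q = 2^r), the symmetric capacity satisfies the lower bound I(W) ≥ log₂( q / (1 + Σ_{i=1}^{r} 2^{i−1}·Z_i(W)) ). -/

import Mathlib

open Finset

instance (r : ℕ) : NeZero (2 ^ r) := ⟨pow_ne_zero r two_ne_zero⟩

/-- The Bhattacharyya parameter `Z(W; x, x') = ∑_y √(W x y · W x' y)` of a pair of inputs. -/
noncomputable def bhat {q : ℕ} {Y : Type*} [Fintype Y] (W : ZMod q → Y → ℝ) (x x' : ZMod q) : ℝ :=
  ∑ y, Real.sqrt (W x y * W x' y)

/-- `Z_v(W) = (1/q) ∑_x Z(W; x, x+v)`. -/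
noncomputable def Zv {q : ℕ} [NeZero q] {Y : Type*} [Fintype Y] (W : ZMod q → Y → ℝ) (v : ZMod q) : ℝ :=
  (1 / (q : ℝ)) * ∑ x, bhat W x (x + v)

/-- `W` is a discrete memoryless channel: nonnegative entries and rows summing to one. -/
def IsDMC {q : ℕ} {Y : Type*} [Fintype Y] (W : ZMod q → Y → ℝ) : Prop :=
  (∀ x y, 0 ≤ W x y) ∧ ∀ x, ∑ y, W x y = 1

/-- The ordered weight `wt(v) = r - ν₂(v̄)` of `v : ZMod (2^r)`. -/
def owt (r : ℕ) {q : ℕ} (v : ZMod q) : ℕ := r - padicValNat 2 v.val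

/-- The `i`-th average Bhattacharyya distance `Z_i(W) = 2^{-(i-1)} ∑_{v ∈ X_i} Z_v(W)`. -/
noncomputable def Zi (r : ℕ) {Y : Type*} [Fintype Y] (W : ZMod (2 ^ r) → Y → ℝ) (i : ℕ) : ℝ :=
  (1 / 2 ^ (i - 1) : ℝ) *
    ∑ v ∈ univ.filter (fun v : ZMod (2 ^ r) => v ≠ 0 ∧ owt r v = i), Zv W v

/-- The symmetric capacity `I(W)` (with `0 log 0 = 0`). -/
noncomputable def symCap {q : ℕ} [NeZero q] {Y : Type*} [Fintype Y] (W : ZMod q → Y → ℝ) : ℝ :=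
  ∑ x, ∑ y, (1 / (q : ℝ)) * W x y *
    Real.logb 2 (W x y / ∑ x', (1 / (q : ℝ)) * W x' y)

/-- `Z_max^{(j)}(W) = max_{v ∈ X_j} Z_v(W)` (as a supremum over the finite nonempty class `X_j`). -/
noncomputable def Zmax (r : ℕ) {Y : Type*} [Fintype Y] (W : ZMod (2 ^ r) → Y → ℝ) (j : ℕ) : ℝ :=
  ⨆ v : {v : ZMod (2 ^ r) // v ≠ 0 ∧ owt r v = j}, Zv W v.1

/-- The Arıkan minus transform `W⁻ u₁ (y₁,y₂) = (1/q) ∑_{u₂} W (u₁+u₂) y₁ · W u₂ y₂`. -/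
noncomputable def Wminus {q : ℕ} [NeZero q] {Y : Type*} [Fintype Y] (W : ZMod q → Y → ℝ) :
    ZMod q → Y × Y → ℝ :=
  fun u₁ p => (1 / (q : ℝ)) * ∑ u₂, W (u₁ + u₂) p.1 * W u₂ p.2

/-- The Arıkan plus transform `W⁺ u₂ (y₁,y₂,u₁) = (1/q) W (u₁+u₂) y₁ · W u₂ y₂`. -/
noncomputable def Wplus {q : ℕ} [NeZero q] {Y : Type*} [Fintype Y] (W : ZMod q → Y → ℝ) :
    ZMod q → Y × Y × ZMod q → ℝ :=
  fun u₂ p => (1 / (q : ℝ)) * W (p.2.2 + u₂) p.1 * W u₂ p.2.1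

/-- The restricted channel `W^{[r-k]}` for the `r-k` least significant bits. -/
noncomputable def Wres (r k : ℕ) {Y : Type*} [Fintype Y] (W : ZMod (2 ^ r) → Y → ℝ) :
    ZMod (2 ^ (r - k)) → Y → ℝ :=
  fun u y => (1 / 2 ^ k : ℝ) *
    ∑ x ∈ univ.filter (fun x : ZMod (2 ^ r) => x.val % 2 ^ (r - k) = u.val), W x y

/-- `I(W) ≥ log₂( q / (1 + ∑_{i=1}^r 2^{i-1} Z_i(W)) )`. -/
theorem capacity_lower_bound (r : ℕ) (hr : 1 ≤ r) {Y : Type*} [Fintype Y] [Nonempty Y]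
    (W : ZMod (2 ^ r) → Y → ℝ) (hW : IsDMC W) :
    Real.logb 2 ((2 ^ r : ℝ) / (1 + ∑ i ∈ Finset.Icc 1 r, (2 : ℝ) ^ (i - 1) * Zi r W i)) ≤
      symCap W := by
  obtain ⟨hWnn, hWsum⟩ := hW
  have hln2 : (0:ℝ) < Real.log 2 := Real.log_pos one_lt_two
  set n : ℝ := ((2 ^ r : ℕ) : ℝ) with hn
  have hq0 : (0:ℝ) < n := by rw [hn]; positivity
  set p : Y → ℝ := fun y => ∑ x' : ZMod (2 ^ r), (1 / n) * W x' y with hp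
  have hpnn : ∀ y, 0 ≤ p y := fun y =>
    Finset.sum_nonneg fun x _ => mul_nonneg (by positivity) (hWnn x y)
  have hq0' : ((2 ^ r : ℕ) : ℝ) ≠ 0 := by positivity
  have hsum1 : (∑ x : ZMod (2^r), ∑ y, (1/n) * W x y) = 1 := by
    have h : ∀ x : ZMod (2 ^ r), (∑ y, (1/n) * W x y) = 1/n := by
      intro x; rw [← Finset.mul_sum, hWsum, mul_one]
    rw [Finset.sum_congr rfl fun x _ => h x]
    rw [Finset.sum_const, Finset.card_univ, ZMod.card, nsmul_eq_mul, hn,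
      mul_one_div, div_self hq0']
  have hpsum : (∑ y, p y) = 1 := by
    simp only [hp]
    rw [Finset.sum_comm]
    exact hsum1
  set a : Y → ℝ := fun y => (1/n) * ∑ x, Real.sqrt (W x y) with ha
  have hann : ∀ y, 0 ≤ a y := fun y =>
    mul_nonneg (by positivity) (Finset.sum_nonneg fun x _ => Real.sqrt_nonneg _)
  set S : ℝ := ∑ v ∈ Finset.univ.filter (fun v : ZMod (2 ^ r) => v ≠ 0), Zv W v with hSdef
  have hZvnn : ∀ v : ZMod (2 ^ r), 0 ≤ Zv W v := fun v =>
    mul_nonneg (by positivity)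
      (Finset.sum_nonneg fun x _ => Finset.sum_nonneg fun y _ => Real.sqrt_nonneg _)
  have hSnn : 0 ≤ S := Finset.sum_nonneg fun v _ => hZvnn v
  -- combinatorial step: ∑ i ∈ Icc 1 r, 2^(i-1) * Zi = S
  have hS : (∑ i ∈ Finset.Icc 1 r, (2:ℝ) ^ (i-1) * Zi r W i) = S := by
    have hstep : ∀ i, (2:ℝ) ^ (i-1) * Zi r W i
        = ∑ v ∈ (Finset.univ.filter (fun v : ZMod (2 ^ r) => v ≠ 0)).filter
            (fun v => owt r v = i), Zv W v := by
      intro i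
      rw [Zi, ← mul_assoc, mul_one_div, div_self (by positivity), one_mul,
        Finset.filter_filter]
    rw [Finset.sum_congr rfl fun i _ => hstep i]
    refine Finset.sum_fiberwise_of_maps_to (fun v hv => ?_) (Zv W)
    simp only [Finset.mem_filter, Finset.mem_univ, true_and] at hv
    have hval : v.val ≠ 0 := fun h => hv ((ZMod.val_eq_zero v).mp h)
    have hlt : v.val < 2 ^ r := ZMod.val_lt v
    have hdvd : 2 ^ padicValNat 2 v.val ≤ v.val :=
      Nat.le_of_dvd (Nat.pos_of_ne_zero hval) pow_padicValNat_dvd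
    have hnu : padicValNat 2 v.val < r := by
      by_contra h
      push_neg at h
      exact absurd (lt_of_le_of_lt (le_trans (Nat.pow_le_pow_right (by norm_num) h) hdvd) hlt)
        (lt_irrefl _)
    simp only [Finset.mem_Icc, owt]
    omega
  -- ∑_y a y ^ 2 = (1 + S) / n
  have hA : (∑ y, a y ^ 2) = (1 + S) / n := by
    have h1 : ∀ y, a y ^ 2 = (1/n)^2 * ∑ x : ZMod (2^r), ∑ x' : ZMod (2^r),
        Real.sqrt (W x y * W x' y) := by
      intro y
      have hsq : (∑ x : ZMod (2^r), Real.sqrt (W x y)) ^ 2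
          = ∑ x : ZMod (2^r), ∑ x' : ZMod (2^r), Real.sqrt (W x y * W x' y) := by
        rw [sq, Finset.sum_mul_sum]
        refine Finset.sum_congr rfl fun x _ => Finset.sum_congr rfl fun x' _ => ?_
        rw [Real.sqrt_mul (hWnn x y)]
      simp only [ha]
      rw [mul_pow, hsq]
    rw [Finset.sum_congr rfl fun y _ => h1 y, ← Finset.mul_sum, Finset.sum_comm]
    have h2 : ∀ x : ZMod (2^r), (∑ y, ∑ x' : ZMod (2^r), Real.sqrt (W x y * W x' y))
        = ∑ v : ZMod (2^r), bhat W x (x + v) := by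
      intro x
      rw [Finset.sum_comm]
      exact (Equiv.sum_comp (Equiv.addLeft x) (bhat W x)).symm
    rw [Finset.sum_congr rfl fun x _ => h2 x, Finset.sum_comm]
    have h3 : ∀ v : ZMod (2^r), (∑ x, bhat W x (x + v)) = n * Zv W v := by
      intro v
      rw [Zv, hn, ← mul_assoc, mul_one_div, div_self hq0', one_mul]
    rw [Finset.sum_congr rfl fun v _ => h3 v, ← Finset.mul_sum]
    have hZ0 : Zv W (0 : ZMod (2^r)) = 1 := by
      rw [Zv]
      have : ∀ x : ZMod (2^r), bhat W x (x + 0) = 1 := by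
        intro x
        rw [add_zero, bhat, ← hWsum x]
        exact Finset.sum_congr rfl fun y _ => Real.sqrt_mul_self (hWnn x y)
      rw [Finset.sum_congr rfl fun x _ => this x, Finset.sum_const, Finset.card_univ,
        ZMod.card, nsmul_eq_mul, mul_one]
      exact one_div_mul_cancel hq0'
    have hsplit : (∑ v : ZMod (2^r), Zv W v) = Zv W 0 + S := by
      rw [hSdef, Finset.filter_ne']
      exact (Finset.add_sum_erase Finset.univ (Zv W) (Finset.mem_univ 0)).symm
    rw [hsplit, hZ0]
    field_simp
  -- positivity of B
  set B : ℝ := ∑ y, Real.sqrt (p y) * a y with hB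
  obtain ⟨y₀, hy₀⟩ : ∃ y, 0 < W 0 y := by
    by_contra h
    push_neg at h
    have h0 : (∑ y, W (0 : ZMod (2^r)) y) = 0 :=
      Finset.sum_eq_zero fun y _ => le_antisymm (h y) (hWnn 0 y)
    rw [hWsum] at h0
    norm_num at h0
  have hpy₀ : 0 < p y₀ :=
    Finset.sum_pos' (fun x _ => mul_nonneg (by positivity) (hWnn x y₀))
      ⟨0, Finset.mem_univ _, mul_pos (by positivity) hy₀⟩
  have hay₀ : 0 < a y₀ :=
    mul_pos (by positivity)
      (Finset.sum_pos' (fun x _ => Real.sqrt_nonneg _)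
        ⟨0, Finset.mem_univ _, Real.sqrt_pos.mpr hy₀⟩)
  have hBpos : 0 < B :=
    Finset.sum_pos' (fun y _ => mul_nonneg (Real.sqrt_nonneg _) (hann y))
      ⟨y₀, Finset.mem_univ _, mul_pos (Real.sqrt_pos.mpr hpy₀) hay₀⟩
  -- Cauchy-Schwarz: B^2 ≤ ∑ a^2
  have hCS : B ^ 2 ≤ ∑ y, a y ^ 2 := by
    calc B ^ 2 ≤ (∑ y, Real.sqrt (p y) ^ 2) * ∑ y, a y ^ 2 :=
          Finset.sum_mul_sq_le_sq_mul_sq Finset.univ (fun y => Real.sqrt (p y)) a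
      _ = ∑ y, a y ^ 2 := by
          rw [Finset.sum_congr rfl fun y _ => Real.sq_sqrt (hpnn y), hpsum, one_mul]
  set L : ℝ := Real.logb 2 B with hL
  -- pointwise Jensen bound
  have key : ∀ (x : ZMod (2^r)) (y : Y),
      (-2*L) * ((1/n) * W x y) + (-(2/(Real.log 2 * B))) * ((1/n) * (Real.sqrt (W x y) * Real.sqrt (p y)))
        + (2/Real.log 2) * ((1/n) * W x y)
      ≤ (1/n) * W x y * Real.logb 2 (W x y / p y) := by
    intro x y
    by_cases hxy : W x y = 0
    · simp [hxy]
    have hWx : 0 < W x y := (hWnn x y).lt_of_ne (Ne.symm hxy)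
    have hpy : 0 < p y :=
      Finset.sum_pos' (fun x' _ => mul_nonneg (by positivity) (hWnn x' y))
        ⟨x, Finset.mem_univ _, mul_pos (by positivity) hWx⟩
    set u : ℝ := Real.sqrt (p y / W x y) with hu
    have hupos : 0 < u := Real.sqrt_pos.mpr (div_pos hpy hWx)
    have hlogu : Real.log u ≤ Real.log B + (u / B - 1) := by
      have h1 : Real.log (u / B) ≤ u / B - 1 :=
        Real.log_le_sub_one_of_pos (div_pos hupos hBpos)
      rw [Real.log_div (ne_of_gt hupos) (ne_of_gt hBpos)] at h1
      linarith
    have hPu : W x y * u = Real.sqrt (W x y) * Real.sqrt (p y) := by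
      rw [hu, Real.sqrt_div (hpnn y), ← mul_div_assoc, mul_comm (W x y), mul_div_assoc,
        Real.div_sqrt, mul_comm]
    have hlogRHS : Real.logb 2 (W x y / p y) = -2 * (Real.log u / Real.log 2) := by
      have h1 : Real.log u = Real.log (p y / W x y) / 2 :=
        Real.log_sqrt (le_of_lt (div_pos hpy hWx))
      have h2 : Real.log (p y / W x y) = - Real.log (W x y / p y) := by
        rw [← Real.log_inv, inv_div]
      rw [Real.logb, h1, h2]
      ring
    rw [hlogRHS, ← hPu]
    have hLlog : L = Real.log B / Real.log 2 := rfl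
    have hmul : (1/n) * W x y * Real.log u ≤
        (1/n) * W x y * (Real.log B + (u / B - 1)) :=
      mul_le_mul_of_nonneg_left hlogu (by positivity)
    have hB0 : B ≠ 0 := ne_of_gt hBpos
    have hl0 : Real.log 2 ≠ 0 := ne_of_gt hln2
    rw [hLlog]
    have expand : (-2*(Real.log B / Real.log 2)) * ((1/n) * W x y)
        + (-(2/(Real.log 2 * B))) * ((1/n) * (W x y * u))
        + (2/Real.log 2) * ((1/n) * W x y)
        = (-2/Real.log 2) * ((1/n) * W x y * (Real.log B + (u / B - 1))) := by
      field_simp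
      ring
    rw [expand]
    have expand2 : (1/n) * W x y * (-2 * (Real.log u / Real.log 2))
        = (-2/Real.log 2) * ((1/n) * W x y * Real.log u) := by
      field_simp
    rw [expand2]
    apply mul_le_mul_of_nonpos_left hmul
    apply div_nonpos_of_nonpos_of_nonneg <;> [norm_num; exact le_of_lt hln2]
  -- sum the pointwise bound
  have hsum2 : (∑ x : ZMod (2^r), ∑ y, (1/n) * (Real.sqrt (W x y) * Real.sqrt (p y))) = B := by
    rw [Finset.sum_comm, hB]
    refine Finset.sum_congr rfl fun y _ => ?_
    simp only [ha, Finset.mul_sum]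
    exact Finset.sum_congr rfl fun x _ => by ring
  have hJ : -2 * L ≤ symCap W := by
    have hle : (∑ x : ZMod (2^r), ∑ y,
        ((-2*L) * ((1/n) * W x y)
          + (-(2/(Real.log 2 * B))) * ((1/n) * (Real.sqrt (W x y) * Real.sqrt (p y)))
          + (2/Real.log 2) * ((1/n) * W x y)))
        ≤ symCap W := by
      have hsym : symCap W
          = ∑ x : ZMod (2^r), ∑ y, (1/n) * W x y * Real.logb 2 (W x y / p y) := by
        simp only [symCap, hp, hn]
      rw [hsym]
      exact Finset.sum_le_sum fun x _ => Finset.sum_le_sum fun y _ => key x y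
    refine le_trans (le_of_eq ?_) hle
    have hB0 : B ≠ 0 := ne_of_gt hBpos
    have hl0 : Real.log 2 ≠ 0 := ne_of_gt hln2
    calc -2 * L
        = (-2*L) * 1 + (-(2/(Real.log 2 * B))) * B + (2/Real.log 2) * 1 := by
          field_simp
          ring
        _ = (-2*L) * (∑ x : ZMod (2^r), ∑ y, (1/n) * W x y)
            + (-(2/(Real.log 2 * B)))
              * (∑ x : ZMod (2^r), ∑ y, (1/n) * (Real.sqrt (W x y) * Real.sqrt (p y)))
            + (2/Real.log 2) * (∑ x : ZMod (2^r), ∑ y, (1/n) * W x y) := by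
          rw [hsum1, hsum2]
        _ = ∑ x : ZMod (2^r), ∑ y,
            ((-2*L) * ((1/n) * W x y)
              + (-(2/(Real.log 2 * B))) * ((1/n) * (Real.sqrt (W x y) * Real.sqrt (p y)))
              + (2/Real.log 2) * ((1/n) * W x y)) := by
          simp only [Finset.mul_sum, ← Finset.sum_add_distrib]
  -- final assembly
  have hcast : ((2:ℝ) ^ r) = n := by rw [hn]; push_cast; ring
  rw [hS, hcast]
  have h1S : (0:ℝ) < 1 + S := by linarith
  have hgoal : Real.logb 2 (n / (1 + S)) = - Real.logb 2 ((1 + S) / n) := by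
    rw [← Real.logb_inv, inv_div]
  rw [hgoal, ← hA]
  have hstep1 : Real.logb 2 (B ^ 2) ≤ Real.logb 2 (∑ y, a y ^ 2) :=
    Real.logb_le_logb_of_le one_lt_two (pow_pos hBpos 2) hCS
  rw [Real.logb_pow] at hstep1
  push_cast at hstep1
  linarith
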